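/- Let q be a prime power, r ≥ 2, and b ∈ F_{q^r}^* with b ≠ 1; set γ = b^{(q^r−1)/(q−1)}. Let N = {(x, y) ∈ F_{q^r} × F_{q^r} : x^{(q^r−1)/(q−1)} = y^{q^{r−1}} + y^{q^{r−2}} + ⋯ + y^q + y} and let Ω = {(0, y) ∈ N} be its set of points with x = 0. Then the map σ(x, y) = (b x, γ y) is a bijection of N onto itself whose order equals the multiplicative order of b; σ fixes (0, 0); every point of Ω ∖ {(0, 0)} has σ-orbit of cardinality equal to the multiplicative order of γ (so Ω ∖ {(0,0)} splits into (q^{r−1} − 1)/ord(γ) such orbits); and every point of N with x ≠ 0 has σ-orbit of cardinality equal to the multiplicative order of b. -/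

import Mathlib

/-- The orbit of a point `P` under a bijection `f`, i.e. `{f^k(P) : k ∈ ℤ}`
(for an injective `f`, `Q` lies in the orbit of `P` iff some forward iterates agree). -/
def fnOrbit {α : Type*} (f : α → α) (P : α) : Set α :=
  {Q | ∃ j k : ℕ, f^[j] P = f^[k] Q}

/-- `f` has order exactly `n`: `f^[n] = id` and `n` is minimal positive such. -/
def IsOrderOf {α : Type*} (f : α → α) (n : ℕ) : Prop :=
  f^[n] = id ∧ ∀ k : ℕ, 0 < k → f^[k] = id → n ≤ k

private lemma aux_pow_mod {F : Type*} [Monoid F] {a : F} {n : ℕ} (h : a ^ n = 1) (m : ℕ) :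
    a ^ m = a ^ (m % n) := by
  conv_lhs => rw [← Nat.div_add_mod m n]
  rw [pow_add, pow_mul, h, one_pow, one_mul]

private lemma aux_pow_inj {F : Type*} [Field F] {a : F} (ha : a ≠ 0) :
    ∀ i j, i < orderOf a → j < orderOf a → a ^ i = a ^ j → i = j := by
  have key : ∀ i j, i ≤ j → j < orderOf a → a ^ i = a ^ j → i = j := by
    intro i j hij hj h
    obtain ⟨d, rfl⟩ := Nat.exists_eq_add_of_le hij
    have h1 : a ^ i * a ^ d = a ^ i * 1 := by
      rw [← pow_add, mul_one]; exact h.symm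
    have h2 : a ^ d = 1 := mul_left_cancel₀ (pow_ne_zero i ha) h1
    have h3 : orderOf a ∣ d := orderOf_dvd_of_pow_eq_one h2
    have h4 : d = 0 := Nat.eq_zero_of_dvd_of_lt h3 (by omega) |>.symm ▸ rfl
    omega
  intro i j hi hj h
  rcases le_total i j with hle | hle
  · exact key i j hle hj h
  · exact (key j i hle hi h.symm).symm

private lemma fnOrbit_eq_range {α : Type*} {f : α → α} {n : ℕ} (hn : 0 < n)
    (hid : f^[n] = id) (P : α) :
    fnOrbit f P = Set.range (fun m => f^[m] P) := by
  ext Q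
  constructor
  · rintro ⟨j, k, h⟩
    have hQ : f^[n * k] Q = Q := by
      rw [Function.iterate_mul, hid, Function.iterate_id, id_eq]
    have hk : k ≤ n * k := Nat.le_mul_of_pos_left k hn
    refine ⟨(n * k - k) + j, ?_⟩
    calc f^[(n * k - k) + j] P = f^[n * k - k] (f^[j] P) := Function.iterate_add_apply f _ _ P
      _ = f^[n * k - k] (f^[k] Q) := by rw [h]
      _ = f^[(n * k - k) + k] Q := (Function.iterate_add_apply f _ _ Q).symm
      _ = Q := by rw [Nat.sub_add_cancel hk, hQ]
  · rintro ⟨m, rfl⟩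
    exact ⟨m, 0, rfl⟩

private lemma range_ncard {α : Type*} (f : ℕ → α) {n : ℕ} (hn : 0 < n)
    (hper : ∀ m, f m = f (m % n)) (hinj : ∀ i j, i < n → j < n → f i = f j → i = j) :
    (Set.range f).ncard = n := by
  have h1 : Set.range f = f '' Set.Iio n := by
    apply Set.Subset.antisymm
    · rintro x ⟨m, rfl⟩
      exact ⟨m % n, Nat.mod_lt m hn, (hper m).symm⟩
    · rintro x ⟨m, _, rfl⟩
      exact ⟨m, rfl⟩
  have hinj' : Set.InjOn f (Set.Iio n) := fun i hi j hj h => hinj i j hi hj h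
  rw [h1, Set.ncard_image_of_injOn hinj', ← Finset.coe_Iio,
    Set.ncard_coe_finset, Nat.card_Iio]

private lemma card_eval_zero_le {F : Type*} [Field F] {g : Polynomial F} (hg : g ≠ 0) :
    {x : F | Polynomial.eval x g = 0}.ncard ≤ g.natDegree := by
  classical
  have h1 : {x : F | Polynomial.eval x g = 0} = ↑g.roots.toFinset := by
    ext x
    simp [Polynomial.mem_roots, hg, Polynomial.IsRoot]
  rw [h1, Set.ncard_coe_finset]
  exact le_trans (Multiset.toFinset_card_le _) (Polynomial.card_roots' g)

private lemma trace_ker_ncard (p nn q r : ℕ) (hp : p.Prime) (hq : q = p ^ nn) (hn : 1 ≤ nn)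
    (hr : 2 ≤ r) {F : Type*} [Field F] [Fintype F] (hF : Fintype.card F = q ^ r) :
    {y : F | ∑ i ∈ Finset.range r, y ^ q ^ i = 0}.ncard = q ^ (r - 1) := by
  classical
  have hq2 : 2 ≤ q := by
    rw [hq]
    calc 2 = 2 ^ 1 := rfl
      _ ≤ p ^ nn := Nat.pow_le_pow_left hp.two_le nn |>.trans' (Nat.pow_le_pow_right (by omega) hn) |>.trans (le_refl _)
  -- characteristic
  have hchar' : CharP F (ringChar F) := ringChar.charP F
  have hrp : (ringChar F).Prime := CharP.char_is_prime F (ringChar F)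
  have hdvd : (ringChar F) ∣ q ^ r := by
    have h0 : ((q ^ r : ℕ) : F) = 0 := by rw [← hF]; exact FiniteField.cast_card_eq_zero F
    exact (CharP.cast_eq_zero_iff F (ringChar F) (q ^ r)).mp h0
  have hrpp : ringChar F = p := by
    rw [hq, ← pow_mul] at hdvd
    have h2 := hrp.dvd_of_dvd_pow hdvd
    exact (Nat.prime_dvd_prime_iff_eq hrp hp).mp h2
  haveI : CharP F p := hrpp ▸ hchar'
  haveI : Fact p.Prime := ⟨hp⟩
  have hqpow : ∀ k : ℕ, q ^ k = p ^ (nn * k) := by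
    intro k; rw [hq, ← pow_mul]
  have hadd : ∀ (a c : F) (k : ℕ), (a + c) ^ q ^ k = a ^ q ^ k + c ^ q ^ k := by
    intro a c k
    rw [hqpow k]
    exact add_pow_char_pow ..
  have hsub : ∀ (a c : F) (k : ℕ), (a - c) ^ q ^ k = a ^ q ^ k - c ^ q ^ k := by
    intro a c k
    rw [hqpow k]
    exact sub_pow_char_pow ..
  -- the two additive maps
  let Tr : F →+ F := AddMonoidHom.mk' (fun y => ∑ i ∈ Finset.range r, y ^ q ^ i)
    (by
      intro a c
      rw [← Finset.sum_add_distrib]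
      exact Finset.sum_congr rfl fun i _ => hadd a c i)
  let φ : F →+ F := AddMonoidHom.mk' (fun z => z ^ q - z)
    (by
      intro a c
      have h1 := hadd a c 1
      rw [pow_one] at h1
      simp only [h1]
      ring)
  have hTrφ : ∀ z : F, Tr (φ z) = 0 := by
    intro z
    have hz : z ^ q ^ r = z := by rw [← hF]; exact FiniteField.pow_card z
    show ∑ i ∈ Finset.range r, (z ^ q - z) ^ q ^ i = 0
    have hterm : ∀ i, (z ^ q - z) ^ q ^ i = z ^ q ^ (i + 1) - z ^ q ^ i := by
      intro i
      rw [hsub (z ^ q) z i, ← pow_mul]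
      congr 2
      rw [pow_succ]
      exact Nat.mul_comm q (q ^ i)
    calc ∑ i ∈ Finset.range r, (z ^ q - z) ^ q ^ i
        = ∑ i ∈ Finset.range r, (z ^ q ^ (i + 1) - z ^ q ^ i) :=
          Finset.sum_congr rfl fun i _ => hterm i
      _ = z ^ q ^ r - z ^ q ^ 0 := Finset.sum_range_sub (fun i => z ^ q ^ i) r
      _ = 0 := by rw [hz, pow_zero, pow_one, sub_self]
  -- cardinality bookkeeping
  have hkerset : (φ.ker : Set F) = {x : F | Polynomial.eval x (Polynomial.X ^ q - Polynomial.X) = 0} := by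
    ext x
    simp [AddMonoidHom.mem_ker, φ, sub_eq_zero]
  have hXq0 : (Polynomial.X ^ q - Polynomial.X : Polynomial F) ≠ 0 := by
    intro h
    have hc := congrArg (fun g => Polynomial.coeff g q) h
    simp [Polynomial.coeff_X_pow, Polynomial.coeff_X, show q ≠ 1 by omega] at hc
    rw [if_neg (show (1 : ℕ) ≠ q by omega), sub_zero] at hc
    exact one_ne_zero hc
  have hkerle : Nat.card φ.ker ≤ q := by
    have h1 : Nat.card φ.ker = (φ.ker : Set F).ncard := by
      rw [← Nat.card_coe_set_eq]; rfl
    rw [h1, hkerset]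
    refine le_trans (card_eval_zero_le hXq0) ?_
    refine le_trans (Polynomial.natDegree_sub_le _ _) ?_
    rw [Polynomial.natDegree_X_pow, Polynomial.natDegree_X]
    omega
  -- the trace polynomial
  set PT : Polynomial F := ∑ i ∈ Finset.range r, Polynomial.X ^ q ^ i with hPT
  have hPTeval : ∀ y : F, Polynomial.eval y PT = ∑ i ∈ Finset.range r, y ^ q ^ i := by
    intro y
    rw [hPT, Polynomial.eval_finset_sum]
    exact Finset.sum_congr rfl fun i _ => by rw [Polynomial.eval_pow, Polynomial.eval_X]
  have hPT0 : PT ≠ 0 := by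
    intro h
    have hc := congrArg (fun g => Polynomial.coeff g 1) h
    simp only [hPT, Polynomial.finset_sum_coeff, Polynomial.coeff_X_pow,
      Polynomial.coeff_zero] at hc
    rw [Finset.sum_eq_single 0 (fun i _ hi0 => by
        rw [if_neg]
        intro hqi
        have : 2 ≤ q ^ i := le_trans hq2 (Nat.le_self_pow hi0 q)
        omega)
      (fun h0 => absurd (Finset.mem_range.mpr (by omega)) h0)] at hc
    rw [if_pos (by rw [pow_zero])] at hc
    exact one_ne_zero hc
  have hPTdeg : PT.natDegree ≤ q ^ (r - 1) := by
    rw [hPT]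
    apply Polynomial.natDegree_sum_le_of_forall_le
    intro i hi
    rw [Polynomial.natDegree_X_pow]
    exact Nat.pow_le_pow_right (by omega) (by simp only [Finset.mem_range] at hi; omega)
  set T : Set F := {y : F | ∑ i ∈ Finset.range r, y ^ q ^ i = 0} with hT
  have hTle : T.ncard ≤ q ^ (r - 1) := by
    have : T = {x : F | Polynomial.eval x PT = 0} := by
      ext x; rw [hT]; simp [hPTeval x]
    rw [this]
    exact le_trans (card_eval_zero_le hPT0) hPTdeg
  -- range of φ lands in T
  have hrangesub : (φ.range : Set F) ⊆ T := by
    rintro x ⟨z, rfl⟩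
    exact hTrφ z
  have hrangele : Nat.card φ.range ≤ T.ncard := by
    have h1 : Nat.card φ.range = (φ.range : Set F).ncard := by
      rw [← Nat.card_coe_set_eq]; rfl
    rw [h1]
    exact Set.ncard_le_ncard hrangesub (Set.toFinite _)
  -- counting
  have hiso : Nat.card (F ⧸ φ.ker) = Nat.card φ.range :=
    Nat.card_congr (QuotientAddGroup.quotientKerEquivRange φ).toEquiv
  have htot : Nat.card φ.range * Nat.card φ.ker = q ^ r := by
    rw [← hiso, ← AddSubgroup.card_eq_card_quotient_mul_card_addSubgroup,
      Nat.card_eq_fintype_card, hF]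
  have hqr : q ^ r = q ^ (r - 1) * q := by
    rw [← pow_succ]
    congr 1
    omega
  have hle2 : q ^ (r - 1) * q ≤ T.ncard * q := by
    calc q ^ (r - 1) * q = Nat.card φ.range * Nat.card φ.ker := by rw [htot, hqr]
      _ ≤ T.ncard * q := Nat.mul_le_mul hrangele hkerle
  have hge : q ^ (r - 1) ≤ T.ncard := Nat.le_of_mul_le_mul_right hle2 (by omega)
  exact le_antisymm hTle hge

theorem stmt11 (p nn q r : ℕ) (hp : p.Prime) (hq : q = p ^ nn) (hn : 1 ≤ nn) (hr : 2 ≤ r)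
    {F : Type*} [Field F] [Fintype F] (hF : Fintype.card F = q ^ r)
    (b : F) (hb0 : b ≠ 0) (hb1 : b ≠ 1)
    (γ : F) (hγ : γ = b ^ (∑ i ∈ Finset.range r, q ^ i))
    (N : Set (F × F)) (hN : N = {P : F × F | P.1 ^ (∑ i ∈ Finset.range r, q ^ i)
      = ∑ i ∈ Finset.range r, P.2 ^ q ^ i})
    (Ω : Set (F × F)) (hΩ : Ω = {P : F × F | P ∈ N ∧ P.1 = 0})
    (σ : F × F → F × F) (hσ : σ = fun P => (b * P.1, γ * P.2)) :
    Set.BijOn σ N N ∧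
    IsOrderOf σ (orderOf b) ∧
    σ ((0 : F), (0 : F)) = ((0 : F), (0 : F)) ∧
    (∀ P ∈ Ω, P ≠ ((0 : F), (0 : F)) → (fnOrbit σ P).ncard = orderOf γ) ∧
    {O : Set (F × F) | ∃ P ∈ Ω, P ≠ ((0 : F), (0 : F)) ∧ O = fnOrbit σ P}.ncard
      = (q ^ (r - 1) - 1) / orderOf γ ∧
    ∀ P ∈ N, P.1 ≠ 0 → (fnOrbit σ P).ncard = orderOf b := by
  classical
  set s : ℕ := ∑ i ∈ Finset.range r, q ^ i with hs
  have hq2 : 2 ≤ q := by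
    rw [hq]
    calc 2 = 2 ^ 1 := rfl
      _ ≤ p ^ 1 := Nat.pow_le_pow_left hp.two_le 1
      _ ≤ p ^ nn := Nat.pow_le_pow_right (by have := hp.two_le; omega) hn
  have hs1 : 1 ≤ s := by
    rw [hs]
    calc 1 = q ^ 0 := (pow_zero q).symm
      _ ≤ ∑ i ∈ Finset.range r, q ^ i :=
        Finset.single_le_sum (f := fun i => q ^ i) (fun i _ => Nat.zero_le _)
          (Finset.mem_range.mpr (by omega))
  have hs0 : s ≠ 0 := by omega
  have hbqr : b ^ q ^ r = b := by rw [← hF]; exact FiniteField.pow_card b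
  have hsid : s * q + 1 = s + q ^ r := by
    have h1 : s * q = ∑ i ∈ Finset.range r, q ^ (i + 1) := by
      rw [hs, Finset.sum_mul]
      exact Finset.sum_congr rfl fun i _ => (pow_succ q i).symm
    have h2 : ∑ i ∈ Finset.range (r + 1), q ^ i = (∑ i ∈ Finset.range r, q ^ (i + 1)) + q ^ 0 :=
      Finset.sum_range_succ' _ r
    have h3 : ∑ i ∈ Finset.range (r + 1), q ^ i = s + q ^ r := by
      rw [hs]; exact Finset.sum_range_succ _ r
    rw [pow_zero] at h2
    omega
  have hγq : γ ^ q = γ := by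
    have hkey : γ ^ q * b = γ * b := by
      rw [hγ, ← pow_mul]
      calc b ^ (s * q) * b = b ^ (s * q + 1) := (pow_succ b (s * q)).symm
        _ = b ^ (s + q ^ r) := by rw [hsid]
        _ = b ^ s * b ^ q ^ r := pow_add b s (q ^ r)
        _ = b ^ s * b := by rw [hbqr]
    exact mul_right_cancel₀ hb0 hkey
  have hγqi : ∀ i : ℕ, γ ^ q ^ i = γ := by
    intro i
    induction i with
    | zero => simp
    | succ k ih => rw [pow_succ, pow_mul, ih, hγq]
  have hγ0 : γ ≠ 0 := by rw [hγ]; exact pow_ne_zero _ hb0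
  -- part 1: BijOn
  have hmaps : Set.MapsTo σ N N := by
    intro P hP
    rw [hN] at hP ⊢
    simp only [Set.mem_setOf_eq, ← hs] at hP ⊢
    rw [hσ]
    simp only
    rw [mul_pow, hP, ← hγ, Finset.mul_sum]
    exact Finset.sum_congr rfl fun i _ => by rw [mul_pow, hγqi i]
  have hinj : Function.Injective σ := by
    intro P Q h
    rw [hσ] at h
    simp only [Prod.mk.injEq] at h
    exact Prod.ext (mul_left_cancel₀ hb0 h.1) (mul_left_cancel₀ hγ0 h.2)
  have hbij : Set.BijOn σ N N :=
    (Set.Finite.injOn_iff_bijOn_of_mapsTo (Set.toFinite N) hmaps).mp hinj.injOn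
  -- order facts
  have hbfin : IsOfFinOrder b := by
    refine isOfFinOrder_iff_pow_eq_one.mpr ⟨Fintype.card F - 1, ?_, ?_⟩
    · have : 1 < Fintype.card F := Fintype.one_lt_card
      omega
    · exact FiniteField.pow_card_sub_one_eq_one b hb0
  have hbpos : 0 < orderOf b := hbfin.orderOf_pos
  have hbn : b ^ orderOf b = 1 := pow_orderOf_eq_one b
  have hγn : γ ^ orderOf b = 1 := by
    rw [hγ, ← pow_mul, mul_comm, pow_mul, hbn, one_pow]
  have hγfin : IsOfFinOrder γ := isOfFinOrder_iff_pow_eq_one.mpr ⟨orderOf b, hbpos, hγn⟩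
  have hγpos : 0 < orderOf γ := hγfin.orderOf_pos
  have hγg : γ ^ orderOf γ = 1 := pow_orderOf_eq_one γ
  -- iterate formula
  have hiter : ∀ (m : ℕ) (P : F × F), σ^[m] P = (b ^ m * P.1, γ ^ m * P.2) := by
    intro m
    induction m with
    | zero => intro P; simp
    | succ k ih =>
      intro P
      rw [Function.iterate_succ_apply, ih, hσ]
      simp only [Prod.mk.injEq]
      constructor <;> ring
  have hσn : σ^[orderOf b] = id := by
    funext P
    rw [hiter, hbn, hγn]
    simp
  have hIsOrd : IsOrderOf σ (orderOf b) := by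
    refine ⟨hσn, ?_⟩
    intro k hk hidk
    have h11 : σ^[k] ((1 : F), (1 : F)) = ((1 : F), (1 : F)) := by rw [hidk]; rfl
    rw [hiter] at h11
    simp only [mul_one, Prod.mk.injEq] at h11
    exact Nat.le_of_dvd hk (orderOf_dvd_of_pow_eq_one h11.1)
  have hfix : σ ((0 : F), (0 : F)) = ((0 : F), (0 : F)) := by
    rw [hσ]; simp
  have horbit : ∀ P : F × F, fnOrbit σ P = Set.range (fun m => σ^[m] P) :=
    fnOrbit_eq_range hbpos hσn
  -- part 6
  have part6 : ∀ P ∈ N, P.1 ≠ 0 → (fnOrbit σ P).ncard = orderOf b := by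
    intro P _ hx
    rw [horbit P]
    refine range_ncard _ hbpos ?_ ?_
    · intro m
      show σ^[m] P = σ^[m % orderOf b] P
      rw [hiter, hiter, aux_pow_mod hbn m, aux_pow_mod hγn m]
    · intro i j hi hj h
      have h' : σ^[i] P = σ^[j] P := h
      rw [hiter, hiter] at h'
      have h1 : b ^ i * P.1 = b ^ j * P.1 := congrArg Prod.fst h'
      exact aux_pow_inj hb0 i j hi hj (mul_right_cancel₀ hx h1)
  -- part 4
  have part4 : ∀ P ∈ Ω, P ≠ ((0 : F), (0 : F)) → (fnOrbit σ P).ncard = orderOf γ := by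
    intro P hP hP0
    rw [hΩ] at hP
    obtain ⟨hPN, hPx⟩ := hP
    have hy : P.2 ≠ 0 := fun h => hP0 (Prod.ext hPx h)
    rw [horbit P]
    refine range_ncard _ hγpos ?_ ?_
    · intro m
      show σ^[m] P = σ^[m % orderOf γ] P
      rw [hiter, hiter, hPx, mul_zero, mul_zero, aux_pow_mod hγg m]
    · intro i j hi hj h
      have h' : σ^[i] P = σ^[j] P := h
      rw [hiter, hiter] at h'
      have h2 : γ ^ i * P.2 = γ ^ j * P.2 := congrArg Prod.snd h'
      exact aux_pow_inj hγ0 i j hi hj (mul_right_cancel₀ hy h2)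
  -- part 5
  set S : Set (F × F) := Ω \ {((0 : F), (0 : F))} with hS
  have hSmem : ∀ P, P ∈ S ↔ (P ∈ Ω ∧ P ≠ ((0 : F), (0 : F))) := by
    intro P
    rw [hS]
    simp [Set.mem_diff]
  have horbS : ∀ P ∈ S, fnOrbit σ P ⊆ S := by
    intro P hP Q hQ
    obtain ⟨hPΩ, hP0⟩ := (hSmem P).mp hP
    rw [hΩ] at hPΩ
    obtain ⟨hPN, hPx⟩ := hPΩ
    have hy : P.2 ≠ 0 := fun h => hP0 (Prod.ext hPx h)
    rw [horbit P] at hQ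
    obtain ⟨m, hm⟩ := hQ
    have hQm : Q = σ^[m] P := hm.symm
    subst hQm
    rw [hSmem]
    constructor
    · rw [hΩ]
      refine ⟨hmaps.iterate m hPN, ?_⟩
      rw [hiter, hPx, mul_zero]
    · intro h
      have h2 : γ ^ m * P.2 = 0 := by
        rw [hiter] at h
        exact congrArg Prod.snd h
      exact mul_ne_zero (pow_ne_zero _ hγ0) hy h2
  have horb_eq : ∀ P Q : F × F, Q ∈ fnOrbit σ P → fnOrbit σ Q = fnOrbit σ P := by
    have key : ∀ P Q : F × F, (∃ j k : ℕ, σ^[j] P = σ^[k] Q) → fnOrbit σ Q ⊆ fnOrbit σ P := by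
      rintro P Q ⟨j, k, h⟩ R ⟨j', k', h'⟩
      refine ⟨j' + j, k + k', ?_⟩
      calc σ^[j' + j] P = σ^[j'] (σ^[j] P) := Function.iterate_add_apply σ j' j P
        _ = σ^[j'] (σ^[k] Q) := by rw [h]
        _ = σ^[j' + k] Q := (Function.iterate_add_apply σ j' k Q).symm
        _ = σ^[k + j'] Q := by rw [Nat.add_comm]
        _ = σ^[k] (σ^[j'] Q) := Function.iterate_add_apply σ k j' Q
        _ = σ^[k] (σ^[k'] R) := by rw [h']
        _ = σ^[k + k'] R := (Function.iterate_add_apply σ k k' R).symm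
    intro P Q hQ
    obtain ⟨j, k, h⟩ := hQ
    exact Set.Subset.antisymm (key P Q ⟨j, k, h⟩) (key Q P ⟨k, j, h.symm⟩)
  have hfiber : ∀ P ∈ S, {P' | P' ∈ S ∧ fnOrbit σ P' = fnOrbit σ P} = fnOrbit σ P := by
    intro P hP
    ext Q
    simp only [Set.mem_setOf_eq]
    constructor
    · rintro ⟨hQS, hQorb⟩
      rw [← hQorb]
      exact ⟨0, 0, rfl⟩
    · intro hQ
      exact ⟨horbS P hP hQ, horb_eq P Q hQ⟩
  -- cardinality of S
  have hSdesc : S = (fun y : F => ((0 : F), y)) ''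
      ({y : F | ∑ i ∈ Finset.range r, y ^ q ^ i = 0} \ {0}) := by
    ext P
    rw [hSmem, hΩ, hN]
    simp only [Set.mem_setOf_eq, Set.mem_image, Set.mem_diff, Set.mem_singleton_iff, ← hs]
    constructor
    · rintro ⟨⟨hPN, hPx⟩, hP0⟩
      refine ⟨P.2, ⟨?_, fun h => hP0 (Prod.ext hPx h)⟩, Prod.ext hPx.symm rfl⟩
      rw [← hPN, hPx, zero_pow hs0]
    · rintro ⟨y, ⟨hy0, hyne⟩, rfl⟩
      refine ⟨⟨?_, rfl⟩, fun h => hyne (congrArg Prod.snd h)⟩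
      simp only
      rw [zero_pow hs0, hy0]
  have hSncard : S.ncard = q ^ (r - 1) - 1 := by
    rw [hSdesc, Set.ncard_image_of_injective _ (fun a c h => congrArg Prod.snd h)]
    have h0T : (0 : F) ∈ {y : F | ∑ i ∈ Finset.range r, y ^ q ^ i = 0} := by
      simp only [Set.mem_setOf_eq]
      refine Finset.sum_eq_zero fun i _ => ?_
      exact zero_pow (by positivity)
    rw [Set.ncard_diff_singleton_of_mem h0T,
      trace_ker_ncard p nn q r hp hq hn hr hF]
  -- finset counting of orbits
  have hSfin : S.Finite := Set.toFinite _
  set Sf : Finset (F × F) := hSfin.toFinset with hSf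
  have hSfmem : ∀ P, P ∈ Sf ↔ P ∈ S := fun P => hSfin.mem_toFinset
  have hSfcard : Sf.card = q ^ (r - 1) - 1 := by
    rw [← hSncard, Set.ncard_eq_toFinset_card S hSfin]
  have hfil : ∀ O ∈ Sf.image (fun P => fnOrbit σ P),
      (Sf.filter fun a => fnOrbit σ a = O).card = orderOf γ := by
    intro O hO
    obtain ⟨P, hPf, rfl⟩ := Finset.mem_image.mp hO
    have hPS : P ∈ S := (hSfmem P).mp hPf
    have hfin : (fnOrbit σ P).Finite := Set.toFinite _
    have heq : (Sf.filter fun a => fnOrbit σ a = fnOrbit σ P) = hfin.toFinset := by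
      ext Q
      rw [Finset.mem_filter, hSfmem, hfin.mem_toFinset]
      exact Set.ext_iff.mp (hfiber P hPS) Q
    rw [heq, ← Set.ncard_eq_toFinset_card _ hfin]
    obtain ⟨hPΩ, hP0⟩ := (hSmem P).mp hPS
    exact part4 P hPΩ hP0
  have hcount : Sf.card = (Sf.image (fun P => fnOrbit σ P)).card * orderOf γ := by
    rw [Finset.card_eq_sum_card_image (fun P => fnOrbit σ P) Sf,
      Finset.sum_congr rfl hfil, Finset.sum_const, smul_eq_mul]
  have himgdesc : {O : Set (F × F) | ∃ P ∈ Ω, P ≠ ((0 : F), (0 : F)) ∧ O = fnOrbit σ P}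
      = ↑(Sf.image (fun P => fnOrbit σ P)) := by
    ext O
    simp only [Set.mem_setOf_eq, Finset.coe_image, Set.mem_image, Finset.mem_coe]
    constructor
    · rintro ⟨P, hP, hne, rfl⟩
      exact ⟨P, (hSfmem P).mpr ((hSmem P).mpr ⟨hP, hne⟩), rfl⟩
    · rintro ⟨P, hP, rfl⟩
      obtain ⟨h1, h2⟩ := (hSmem P).mp ((hSfmem P).mp hP)
      exact ⟨P, h1, h2, rfl⟩
  have part5 : {O : Set (F × F) | ∃ P ∈ Ω, P ≠ ((0 : F), (0 : F)) ∧ O = fnOrbit σ P}.ncard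
      = (q ^ (r - 1) - 1) / orderOf γ := by
    rw [himgdesc, Set.ncard_coe_finset]
    have h1 : q ^ (r - 1) - 1 = (Sf.image (fun P => fnOrbit σ P)).card * orderOf γ := by
      rw [← hSfcard, hcount]
    rw [h1, Nat.mul_div_cancel _ hγpos]
  exact ⟨hbij, hIsOrd, hfix, part4, part5, part6⟩
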